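/- (3/2-law) Let g : (0,∞)⁴ → (0,∞) be a function of (σ², P, V, C) satisfying for all positive arguments and all λ > 0: (shares scaling) g(σ², λP, V/λ, C) = g(σ², P, V, C); (money scaling) g(σ², λP, V, λC) = g(σ², P, V, C); (time scaling) g(λσ², P, λV, C) = λ·g(σ², P, V, C); (leverage neutrality) g(λ²σ², P/λ, V, C) = g(σ², P, V, C). Then there exists a constant c > 0 such that g(σ², P, V, C) = c · (σ²)^(1/3) · P^(2/3) · V^(2/3) · C^(−2/3) for all positive arguments; equivalently, the number of trades N = g(σ², P, V, C) satisfies N^(3/2) = c^(3/2) · √(σ²) · P · V / C. -/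

import Mathlib

open Real

/-- The 3/2-law: if the number of trades `N = g(σ², P, V, C)` is a dimensionally
invariant and leverage neutral positive function, then
`g(σ², P, V, C) = c · (σ²)^(1/3) · P^(2/3) · V^(2/3) · C^(−2/3)`; equivalently
`N^(3/2) = c^(3/2) · √(σ²) · P · V / C`. -/
theorem three_halves_law
    (g : ℝ → ℝ → ℝ → ℝ → ℝ)
    (hpos : ∀ s P V C : ℝ, 0 < s → 0 < P → 0 < V → 0 < C → 0 < g s P V C)
    (hshares : ∀ s P V C lam : ℝ, 0 < s → 0 < P → 0 < V → 0 < C → 0 < lam →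
      g s (lam * P) (V / lam) C = g s P V C)
    (hmoney : ∀ s P V C lam : ℝ, 0 < s → 0 < P → 0 < V → 0 < C → 0 < lam →
      g s (lam * P) V (lam * C) = g s P V C)
    (htime : ∀ s P V C lam : ℝ, 0 < s → 0 < P → 0 < V → 0 < C → 0 < lam →
      g (lam * s) P (lam * V) C = lam * g s P V C)
    (hleverage : ∀ s P V C lam : ℝ, 0 < s → 0 < P → 0 < V → 0 < C → 0 < lam →
      g (lam ^ 2 * s) (P / lam) V C = g s P V C) :
    ∃ c : ℝ, 0 < c ∧ ∀ s P V C : ℝ, 0 < s → 0 < P → 0 < V → 0 < C →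
      g s P V C
        = c * s ^ ((1 : ℝ) / 3) * P ^ ((2 : ℝ) / 3) * V ^ ((2 : ℝ) / 3)
            * C ^ (-(2 : ℝ) / 3)
      ∧ (g s P V C) ^ ((3 : ℝ) / 2)
          = c ^ ((3 : ℝ) / 2) * Real.sqrt s * P * V / C := by
  have hc : 0 < g 1 1 1 1 := hpos 1 1 1 1 one_pos one_pos one_pos one_pos
  refine ⟨g 1 1 1 1, hc, ?_⟩
  intro s P V C hs hP hV hC
  set c := g 1 1 1 1 with hcdef
  set v : ℝ := P * V / C with hvdef
  have hv : 0 < v := by positivity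
  -- Step 1: normalize C to 1
  have h1 : g s P V C = g s (P / C) V 1 := by
    have h := hmoney s (P / C) V 1 C hs (by positivity) hV one_pos hC
    have e1 : C * (P / C) = P := by field_simp
    rw [e1, mul_one] at h
    exact h
  -- Step 2: normalize P to 1
  have h2 : g s (P / C) V 1 = g s 1 v 1 := by
    have h := hshares s (P / C) V 1 (C / P) hs (by positivity) hV one_pos (by positivity)
    have e1 : C / P * (P / C) = 1 := by field_simp
    have e2 : V / (C / P) = v := by rw [hvdef]; field_simp
    rw [e1, e2] at h
    exact h.symm
  -- Step 3: cube root scaling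
  set lam : ℝ := (v / s) ^ ((1 : ℝ) / 3) with hlamdef
  have hlam : 0 < lam := by positivity
  have hcube : lam ^ 3 * s = v := by
    have : lam ^ (3 : ℕ) = v / s := by
      rw [hlamdef, ← Real.rpow_natCast ((v / s) ^ ((1 : ℝ) / 3)) 3,
        ← Real.rpow_mul (le_of_lt (div_pos hv hs))]
      norm_num
    rw [this]; field_simp
  have hkey : lam ^ 2 * s = v / lam := by
    rw [eq_div_iff (ne_of_gt hlam)]
    linear_combination hcube
  have hlev : g (lam ^ 2 * s) (1 / lam) v 1 = g s 1 v 1 :=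
    hleverage s 1 v 1 lam hs one_pos hv one_pos hlam
  have hsh2 : g (lam ^ 2 * s) 1 (v / lam) 1 = g (lam ^ 2 * s) (1 / lam) v 1 := by
    have h := hshares (lam ^ 2 * s) (1 / lam) v 1 lam (by positivity)
      (by positivity) hv one_pos hlam
    have e1 : lam * (1 / lam) = 1 := by field_simp
    rw [e1] at h
    exact h
  have htm : g (lam ^ 2 * s) 1 (lam ^ 2 * s) 1 = (lam ^ 2 * s) * c := by
    have h := htime 1 1 1 1 (lam ^ 2 * s) one_pos one_pos one_pos one_pos (by positivity)
    rw [mul_one] at h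
    exact h
  have h3 : g s 1 v 1 = (lam ^ 2 * s) * c := by
    rw [← hlev, ← hsh2, ← hkey, htm]
  -- compute lam ^ 2 * s
  have hlam2 : lam ^ 2 * s = s ^ ((1 : ℝ) / 3) * v ^ ((2 : ℝ) / 3) := by
    have e : lam ^ (2 : ℕ) = (v / s) ^ ((2 : ℝ) / 3) := by
      rw [hlamdef, ← Real.rpow_natCast ((v / s) ^ ((1 : ℝ) / 3)) 2,
        ← Real.rpow_mul (le_of_lt (div_pos hv hs))]
      norm_num
    have hs13 : s ^ ((1 : ℝ) / 3) = s / s ^ ((2 : ℝ) / 3) := by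
      rw [eq_div_iff (by positivity), ← Real.rpow_add hs]
      norm_num
    rw [e, Real.div_rpow hv.le hs.le, hs13]
    ring
  have hv23 : v ^ ((2 : ℝ) / 3)
      = P ^ ((2 : ℝ) / 3) * V ^ ((2 : ℝ) / 3) * C ^ (-(2 : ℝ) / 3) := by
    have : (-(2 : ℝ)) / 3 = -((2 : ℝ) / 3) := by norm_num
    rw [hvdef, Real.div_rpow (by positivity) hC.le,
      Real.mul_rpow hP.le hV.le, this, Real.rpow_neg hC.le, div_eq_mul_inv]
  have hmain : g s P V C
      = c * s ^ ((1 : ℝ) / 3) * P ^ ((2 : ℝ) / 3) * V ^ ((2 : ℝ) / 3)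
          * C ^ (-(2 : ℝ) / 3) := by
    rw [h1, h2, h3, hlam2, hv23]; ring
  refine ⟨hmain, ?_⟩
  rw [hmain]
  rw [Real.mul_rpow (by positivity) (by positivity),
    Real.mul_rpow (by positivity) (by positivity),
    Real.mul_rpow (by positivity) (by positivity),
    Real.mul_rpow (by positivity) (by positivity)]
  rw [← Real.rpow_mul hs.le, ← Real.rpow_mul hP.le, ← Real.rpow_mul hV.le,
    ← Real.rpow_mul hC.le]
  norm_num
  rw [Real.rpow_neg_one, Real.sqrt_eq_rpow]
  ring
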